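/- An affine morphism of schemes f : X → Y is universally closed if and only if it is integral. -/

import Mathlib

open AlgebraicGeometry CategoryTheory CategoryTheory.Limits Polynomial TensorProduct
  MorphismProperty

universe u

open CommRingCat in
/-- The square `A → B`, `A → A[X]`, `B → B[X]`, `A[X] → B[X]` is a pushout in `CommRingCat`. -/
lemma isPushout_polynomialMap_aux {A B : CommRingCat.{u}} (φ : A ⟶ B) :
    CategoryTheory.IsPushout φ (ofHom (Polynomial.C : A →+* Polynomial A))
      (ofHom (Polynomial.C : B →+* Polynomial B))
      (ofHom (Polynomial.mapRingHom φ.hom)) := by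
  letI : Algebra A B := φ.hom.toAlgebra
  have h := CommRingCat.isPushout_tensorProduct A B (Polynomial A)
  refine h.of_iso (Iso.refl _) (Iso.refl _) (Iso.refl _)
    ((polyEquivTensor (A : Type u) (B : Type u)).symm.toRingEquiv.toCommRingCatIso) ?_ ?_ ?_ ?_
  · ext x
    simp [RingHom.algebraMap_toAlgebra]
  · ext x
    simp [Polynomial.algebraMap_eq]
  · ext b : 2
    show (polyEquivTensor (A : Type u) (B : Type u)).symm (b ⊗ₜ 1) = _
    rw [polyEquivTensor_symm_apply_tmul, show (1 : Polynomial A) = Polynomial.C 1 from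
      Polynomial.C_1.symm, Polynomial.sum_C_index (by simp)]
    simp
  · ext1
    apply Polynomial.ringHom_ext
    · intro a
      show (polyEquivTensor (A : Type u) (B : Type u)).symm (1 ⊗ₜ (Polynomial.C a)) = _
      rw [polyEquivTensor_symm_apply_tmul]
      simp [Polynomial.sum_C_index, RingHom.algebraMap_toAlgebra]
    · show (polyEquivTensor (A : Type u) (B : Type u)).symm (1 ⊗ₜ Polynomial.X) = _
      rw [polyEquivTensor_symm_apply_tmul]
      rw [Polynomial.sum_X_index (by simp)]
      simp [Polynomial.monomial_one_one_eq_X]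

lemma specMap_isIntegral_of_universallyClosed {A B : CommRingCat.{u}} (φ : A ⟶ B)
    [h : UniversallyClosed (Spec.map φ)] : RingHom.IsIntegral φ.hom := by
  apply PrimeSpectrum.isIntegral_of_isClosedMap_comap_mapRingHom
  have pb := (isPullback_SpecMap_of_isPushout _ _ _ _ (isPushout_polynomialMap_aux φ)).flip
  exact h.out _ _ _ pb

lemma isIntegralHom_of_universallyClosed {X Y : Scheme.{u}} (f : X ⟶ Y) [IsAffineHom f]
    [UniversallyClosed f] : IsIntegralHom f := by
  apply @HasAffineProperty.of_openCover _ _ IsIntegralHom.hasAffineProperty _ _ _ Y.affineCover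
  intro i
  haveI := isAffineHom_isStableUnderBaseChange
  have h1 : IsAffineHom (Y.affineCover.pullbackHom f i) :=
    (inferInstance : IsAffineHom (pullback.snd f (Y.affineCover.f i)))
  have h2 : UniversallyClosed (Y.affineCover.pullbackHom f i) :=
    (inferInstance : UniversallyClosed (pullback.snd f (Y.affineCover.f i)))
  have h3 : IsAffine ((Y.affineCover.pullback₁ f).X i) :=
    isAffine_of_isAffineHom (Y.affineCover.pullbackHom f i)
  refine ⟨h3, ?_⟩
  haveI : UniversallyClosed (Spec.map (Y.affineCover.pullbackHom f i).appTop) := by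
    haveI := universallyClosed_respectsIso
    rw [← MorphismProperty.arrow_mk_iso_iff (P := @UniversallyClosed)
      (arrowIsoSpecΓOfIsAffine (Y.affineCover.pullbackHom f i))]
    exact h2
  exact specMap_isIntegral_of_universallyClosed (Y.affineCover.pullbackHom f i).appTop

lemma isClosedMap_of_isIntegralHom {X Y : Scheme.{u}} (f : X ⟶ Y) [hf : IsIntegralHom f] :
    IsClosedMap f.base := by
  have : topologically @IsClosedMap f := by
    apply IsZariskiLocalAtTarget.of_openCover (P := topologically @IsClosedMap)
      (𝒰 := Y.affineCover)
    intro i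
    haveI hg : IsIntegralHom (Y.affineCover.pullbackHom f i) :=
      (inferInstance : IsIntegralHom (pullback.snd f (Y.affineCover.f i)))
    haveI h3 : IsAffine ((Y.affineCover.pullback₁ f).X i) :=
      isAffine_of_isAffineHom (Y.affineCover.pullbackHom f i)
    obtain ⟨-, hint⟩ := (@HasAffineProperty.iff_of_isAffine _ _ IsIntegralHom.hasAffineProperty _ _ _ _).mp hg
    rw [MorphismProperty.arrow_mk_iso_iff (P := topologically @IsClosedMap)
      (arrowIsoSpecΓOfIsAffine (Y.affineCover.pullbackHom f i))]
    exact PrimeSpectrum.isClosedMap_comap_of_isIntegral _ hint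
  exact this

/-- An affine morphism of schemes is universally closed if and only if it is
integral. -/
theorem isAffineHom_universallyClosed_iff_isIntegralHom
    {X Y : AlgebraicGeometry.Scheme} (f : X ⟶ Y) [IsAffineHom f] :
    UniversallyClosed f ↔ IsIntegralHom f := by
  constructor
  · intro h
    exact isIntegralHom_of_universallyClosed f
  · intro h
    rw [universallyClosed_eq]
    intro X' Y' i₁ i₂ f' hpb
    haveI : IsIntegralHom f' := MorphismProperty.of_isPullback hpb.flip ‹_›
    exact isClosedMap_of_isIntegralHom f'
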